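/- arXiv:2508.02709 — 5 statements merged into one kernel-verified Lean document; each statement's English description precedes it below -/
import Mathlib

section
/- For every x ∈ 𝕋_{αβ}, the product x · x^i · x^j · x^k equals Re{x·x^i}² − α·Im{x·x^i}², where Re and Im denote the real component and the i-component respectively; in particular this product is a real number. -/
/-- The `(αβ)`-tessarine algebra over a commutative ring `R`:
elements `a + b·i + c·j + d·k` with `i² = α`, `j² = β`, `k² = αβ`,
`ij = k`, `ik = αj`, `jk = βi`. -/
@[ext]
structure Tess (R : Type*) (α β : R) where
  re : R
  imI : R
  imJ : R
  imK : R

namespace Tess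

variable {R : Type*} [CommRing R] {α β : R}

instance : Zero (Tess R α β) := ⟨⟨0, 0, 0, 0⟩⟩
instance : One (Tess R α β) := ⟨⟨1, 0, 0, 0⟩⟩
instance : Add (Tess R α β) :=
  ⟨fun x y => ⟨x.re + y.re, x.imI + y.imI, x.imJ + y.imJ, x.imK + y.imK⟩⟩
instance : Neg (Tess R α β) := ⟨fun x => ⟨-x.re, -x.imI, -x.imJ, -x.imK⟩⟩
instance : Mul (Tess R α β) :=
  ⟨fun x y =>
    ⟨x.re * y.re + α * (x.imI * y.imI) + β * (x.imJ * y.imJ) + α * β * (x.imK * y.imK),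
     x.re * y.imI + x.imI * y.re + β * (x.imJ * y.imK) + β * (x.imK * y.imJ),
     x.re * y.imJ + x.imJ * y.re + α * (x.imI * y.imK) + α * (x.imK * y.imI),
     x.re * y.imK + x.imK * y.re + x.imI * y.imJ + x.imJ * y.imI⟩⟩

@[simp] lemma zero_re : (0 : Tess R α β).re = 0 := rfl
@[simp] lemma zero_imI : (0 : Tess R α β).imI = 0 := rfl
@[simp] lemma zero_imJ : (0 : Tess R α β).imJ = 0 := rfl
@[simp] lemma zero_imK : (0 : Tess R α β).imK = 0 := rfl
@[simp] lemma one_re : (1 : Tess R α β).re = 1 := rfl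
@[simp] lemma one_imI : (1 : Tess R α β).imI = 0 := rfl
@[simp] lemma one_imJ : (1 : Tess R α β).imJ = 0 := rfl
@[simp] lemma one_imK : (1 : Tess R α β).imK = 0 := rfl
@[simp] lemma add_re (x y : Tess R α β) : (x + y).re = x.re + y.re := rfl
@[simp] lemma add_imI (x y : Tess R α β) : (x + y).imI = x.imI + y.imI := rfl
@[simp] lemma add_imJ (x y : Tess R α β) : (x + y).imJ = x.imJ + y.imJ := rfl
@[simp] lemma add_imK (x y : Tess R α β) : (x + y).imK = x.imK + y.imK := rfl
@[simp] lemma neg_re (x : Tess R α β) : (-x).re = -x.re := rfl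
@[simp] lemma neg_imI (x : Tess R α β) : (-x).imI = -x.imI := rfl
@[simp] lemma neg_imJ (x : Tess R α β) : (-x).imJ = -x.imJ := rfl
@[simp] lemma neg_imK (x : Tess R α β) : (-x).imK = -x.imK := rfl
@[simp] lemma mul_re (x y : Tess R α β) :
    (x * y).re = x.re * y.re + α * (x.imI * y.imI) + β * (x.imJ * y.imJ)
      + α * β * (x.imK * y.imK) := rfl
@[simp] lemma mul_imI (x y : Tess R α β) :
    (x * y).imI = x.re * y.imI + x.imI * y.re + β * (x.imJ * y.imK)
      + β * (x.imK * y.imJ) := rfl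
@[simp] lemma mul_imJ (x y : Tess R α β) :
    (x * y).imJ = x.re * y.imJ + x.imJ * y.re + α * (x.imI * y.imK)
      + α * (x.imK * y.imI) := rfl
@[simp] lemma mul_imK (x y : Tess R α β) :
    (x * y).imK = x.re * y.imK + x.imK * y.re + x.imI * y.imJ + x.imJ * y.imI := rfl

instance : CommRing (Tess R α β) where
  add_assoc x y z := by ext <;> simp <;> ring
  zero_add x := by ext <;> simp
  add_zero x := by ext <;> simp
  add_comm x y := by ext <;> simp <;> ring
  neg_add_cancel x := by ext <;> simp
  mul_assoc x y z := by ext <;> simp <;> ring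
  one_mul x := by ext <;> simp
  mul_one x := by ext <;> simp
  left_distrib x y z := by ext <;> simp <;> ring
  right_distrib x y z := by ext <;> simp <;> ring
  zero_mul x := by ext <;> simp
  mul_zero x := by ext <;> simp
  mul_comm x y := by ext <;> simp <;> ring
  nsmul := nsmulRec
  zsmul := zsmulRec

/-- The imaginary unit `i`. -/
def unitI : Tess R α β := ⟨0, 1, 0, 0⟩
/-- The imaginary unit `j`. -/
def unitJ : Tess R α β := ⟨0, 0, 1, 0⟩
/-- The imaginary unit `k`. -/
def unitK : Tess R α β := ⟨0, 0, 0, 1⟩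
/-- Embedding of the base ring. -/
def ofBase (r : R) : Tess R α β := ⟨r, 0, 0, 0⟩

/-- Conjugation `x^i`: negates the `j` and `k` components. -/
def conjI (x : Tess R α β) : Tess R α β := ⟨x.re, x.imI, -x.imJ, -x.imK⟩
/-- Conjugation `x^j`: negates the `i` and `k` components. -/
def conjJ (x : Tess R α β) : Tess R α β := ⟨x.re, -x.imI, x.imJ, -x.imK⟩
/-- Conjugation `x^k`: negates the `i` and `j` components. -/
def conjK (x : Tess R α β) : Tess R α β := ⟨x.re, -x.imI, -x.imJ, x.imK⟩

end Tess

/-- The special unit `w₁ = (√β + j)/(2√β)`. -/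
noncomputable def Tess.w1 (α β : ℝ) : Tess ℝ α β := ⟨1 / 2, 0, 1 / (2 * Real.sqrt β), 0⟩
/-- The special unit `w₂ = (√β − j)/(2√β)`. -/
noncomputable def Tess.w2 (α β : ℝ) : Tess ℝ α β := ⟨1 / 2, 0, -(1 / (2 * Real.sqrt β)), 0⟩

/-- `x · x^i · x^j · x^k = Re{x x^i}² − α · Im{x x^i}²`, a real number. -/
theorem tess_prod_conj (α β : ℝ) (hα : α ≠ 0) (hβ : 0 < β) (x : Tess ℝ α β) :
    x * Tess.conjI x * Tess.conjJ x * Tess.conjK x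
      = (⟨(x * Tess.conjI x).re ^ 2 - α * (x * Tess.conjI x).imI ^ 2, 0, 0, 0⟩ :
          Tess ℝ α β) := by
  obtain ⟨a,b,c,d⟩ := x
  ext <;> simp [Tess.conjI, Tess.conjJ, Tess.conjK] <;> ring
end

section
/- Let α < 0 and β > 0, and let x₁ = a₁ + c₁j, x₂ = a₂ + c₂j be elements of 𝕋_{αβ} whose associated tessarines are x̃₁ = ã₁ + c̃₁j and x̃₂ = ã₂ + c̃₂j. Then the associated tessarine of the product x₁x₂ is ã₁ã₂ + c̃₁c̃₂ j. -/
/-- for `α < 0` and `x₁ = a₁ + c₁ j`, `x₂ = a₂ + c₂ j` with associated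
tessarines `ã_n = a_n + √β c_n`, `c̃_n = a_n − √β c_n`, the associated tessarine of
`x₁ x₂` is `ã₁ã₂ + c̃₁c̃₂ j`; i.e. `x₁x₂` has the form `p + q j` with
`p + √β q = ã₁ ã₂` and `p − √β q = c̃₁ c̃₂`. -/
theorem tess_assoc_mul (α β : ℝ) (hα : α < 0) (hβ : 0 < β) (a₁ c₁ a₂ c₂ : ℝ) :
    ((⟨a₁, 0, c₁, 0⟩ : Tess ℝ α β) * ⟨a₂, 0, c₂, 0⟩).imI = 0 ∧
    ((⟨a₁, 0, c₁, 0⟩ : Tess ℝ α β) * ⟨a₂, 0, c₂, 0⟩).imK = 0 ∧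
    ((⟨a₁, 0, c₁, 0⟩ : Tess ℝ α β) * ⟨a₂, 0, c₂, 0⟩).re
        + Real.sqrt β * ((⟨a₁, 0, c₁, 0⟩ : Tess ℝ α β) * ⟨a₂, 0, c₂, 0⟩).imJ
      = (a₁ + Real.sqrt β * c₁) * (a₂ + Real.sqrt β * c₂) ∧
    ((⟨a₁, 0, c₁, 0⟩ : Tess ℝ α β) * ⟨a₂, 0, c₂, 0⟩).re
        - Real.sqrt β * ((⟨a₁, 0, c₁, 0⟩ : Tess ℝ α β) * ⟨a₂, 0, c₂, 0⟩).imJ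
      = (a₁ - Real.sqrt β * c₁) * (a₂ - Real.sqrt β * c₂) := by
  have h : Real.sqrt β * Real.sqrt β = β := Real.mul_self_sqrt hβ.le
  refine ⟨by simp, by simp, ?_, ?_⟩ <;> simp <;> linear_combination (-(c₁ * c₂)) * h
end

section
/- Let X ∈ 𝕋_{αβ}^{p×p} be written as X = X_s w₁ + X_d w₂, with X_s = X_a + √β X_b, X_d = X_a − √β X_b (where X = X_a + X_b j with ℂ_α-matrices X_a, X_b), and w₁ = (√β + j)/(2√β), w₂ = (√β − j)/(2√β). Then X is invertible in 𝕋_{αβ}^{p×p} if and only if both X_s and X_d are invertible as matrices over the subalgebra ℂ_α, and in that case X⁻¹ = C + D j with C = (X_s⁻¹ + X_d⁻¹)/2 and D = (X_s⁻¹ − C)/√β. -/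
/-- The matrix `X_s = X_a + √β X_b` of the idempotent decomposition, entrywise. -/
noncomputable def Tess.matS {α β : ℝ} {p q : ℕ} (X : Matrix (Fin p) (Fin q) (Tess ℝ α β)) :
    Matrix (Fin p) (Fin q) (Tess ℝ α β) :=
  Matrix.of fun i j =>
    ⟨(X i j).re + Real.sqrt β * (X i j).imJ, (X i j).imI + Real.sqrt β * (X i j).imK, 0, 0⟩

/-- The matrix `X_d = X_a − √β X_b` of the idempotent decomposition, entrywise. -/
noncomputable def Tess.matD {α β : ℝ} {p q : ℕ} (X : Matrix (Fin p) (Fin q) (Tess ℝ α β)) :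
    Matrix (Fin p) (Fin q) (Tess ℝ α β) :=
  Matrix.of fun i j =>
    ⟨(X i j).re - Real.sqrt β * (X i j).imJ, (X i j).imI - Real.sqrt β * (X i j).imK, 0, 0⟩

/-- A matrix has entries in the subalgebra `ℂ_α` (spanned by `1, i`). -/
def Tess.matInCα {α β : ℝ} {p q : ℕ} (Y : Matrix (Fin p) (Fin q) (Tess ℝ α β)) : Prop :=
  ∀ i j, (Y i j).imJ = 0 ∧ (Y i j).imK = 0

namespace TessAux

open Tess

/-- `x ↦ x_a + s x_b` as a ring hom, for `s = ±√β`. -/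
def phi (α β : ℝ) (s : ℝ) (hs : s * s = β) : Tess ℝ α β →+* Tess ℝ α β where
  toFun x := ⟨x.re + s * x.imJ, x.imI + s * x.imK, 0, 0⟩
  map_one' := by ext <;> simp
  map_zero' := by ext <;> simp
  map_add' x y := by ext <;> simp <;> ring
  map_mul' x y := by
    ext
    · simp
      linear_combination (-(x.imJ * y.imJ + α * x.imK * y.imK)) * hs
    · simp
      linear_combination (-(x.imJ * y.imK + x.imK * y.imJ)) * hs
    · simp
    · simp

@[simp] lemma phi_re (α β s : ℝ) (hs : s * s = β) (x : Tess ℝ α β) :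
    (phi α β s hs x).re = x.re + s * x.imJ := rfl
@[simp] lemma phi_imI (α β s : ℝ) (hs : s * s = β) (x : Tess ℝ α β) :
    (phi α β s hs x).imI = x.imI + s * x.imK := rfl
@[simp] lemma phi_imJ (α β s : ℝ) (hs : s * s = β) (x : Tess ℝ α β) :
    (phi α β s hs x).imJ = 0 := rfl
@[simp] lemma phi_imK (α β s : ℝ) (hs : s * s = β) (x : Tess ℝ α β) :
    (phi α β s hs x).imK = 0 := rfl

lemma eq_of_phi (α β : ℝ) (s : ℝ) (hs : s * s = β) (hs0 : s ≠ 0) (z w : Tess ℝ α β)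
    (h1 : phi α β s hs z = phi α β s hs w)
    (h2 : phi α β (-s) (by rw [neg_mul_neg]; exact hs) z
        = phi α β (-s) (by rw [neg_mul_neg]; exact hs) w) : z = w := by
  have e1 := congrArg Tess.re h1
  have e2 := congrArg Tess.re h2
  have e3 := congrArg Tess.imI h1
  have e4 := congrArg Tess.imI h2
  simp only [phi_re, phi_imI] at e1 e2 e3 e4
  ext
  · linarith
  · linarith
  · have : s * z.imJ = s * w.imJ := by linarith
    exact mul_left_cancel₀ hs0 this
  · have : s * z.imK = s * w.imK := by linarith
    exact mul_left_cancel₀ hs0 this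

end TessAux

/-- `X ∈ 𝕋_{αβ}^{p×p}` is invertible iff both `X_s` and `X_d` are
invertible over the subalgebra `ℂ_α`; and in that case `X⁻¹ = C + D j` with
`C = (X_s⁻¹ + X_d⁻¹)/2` and `D = (X_s⁻¹ − C)/√β`. -/
theorem tess_matrix_inverse (α β : ℝ) (hα : α ≠ 0) (hβ : 0 < β) (p : ℕ)
    (X : Matrix (Fin p) (Fin p) (Tess ℝ α β)) :
    ((∃ Y, X * Y = 1 ∧ Y * X = 1) ↔
      ((∃ Ys, Tess.matInCα Ys ∧ Tess.matS X * Ys = 1 ∧ Ys * Tess.matS X = 1) ∧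
       (∃ Yd, Tess.matInCα Yd ∧ Tess.matD X * Yd = 1 ∧ Yd * Tess.matD X = 1))) ∧
    (∀ Ys Yd : Matrix (Fin p) (Fin p) (Tess ℝ α β),
      Tess.matInCα Ys → Tess.matS X * Ys = 1 → Ys * Tess.matS X = 1 →
      Tess.matInCα Yd → Tess.matD X * Yd = 1 → Yd * Tess.matD X = 1 →
      (X * (Matrix.of fun i j =>
          Tess.ofBase (1 / 2 : ℝ) * (Ys i j + Yd i j)
            + (Tess.ofBase (1 / Real.sqrt β)
                * (Ys i j - Tess.ofBase (1 / 2 : ℝ) * (Ys i j + Yd i j)))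
              * Tess.unitJ) = 1 ∧
       (Matrix.of fun i j =>
          Tess.ofBase (1 / 2 : ℝ) * (Ys i j + Yd i j)
            + (Tess.ofBase (1 / Real.sqrt β)
                * (Ys i j - Tess.ofBase (1 / 2 : ℝ) * (Ys i j + Yd i j)))
              * Tess.unitJ) * X = 1)) := by
  classical
  set s : ℝ := Real.sqrt β with hs_def
  have hs : s * s = β := Real.mul_self_sqrt hβ.le
  have hs' : (-s) * (-s) = β := by rw [neg_mul_neg]; exact hs
  have hs0 : s ≠ 0 := by
    have := Real.sqrt_pos.mpr hβ
    simpa [hs_def] using this.ne'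
  let φs : Tess ℝ α β →+* Tess ℝ α β := TessAux.phi α β s hs
  let φd : Tess ℝ α β →+* Tess ℝ α β := TessAux.phi α β (-s) hs'
  let Φs : Matrix (Fin p) (Fin p) (Tess ℝ α β) →+* Matrix (Fin p) (Fin p) (Tess ℝ α β) :=
    RingHom.mapMatrix φs
  let Φd : Matrix (Fin p) (Fin p) (Tess ℝ α β) →+* Matrix (Fin p) (Fin p) (Tess ℝ α β) :=
    RingHom.mapMatrix φd
  have hmatS : Tess.matS X = Φs X := by
    ext i j <;> simp [Tess.matS, Φs, φs, TessAux.phi, RingHom.mapMatrix_apply,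
      Matrix.map_apply, hs_def]
  have hmatD : Tess.matD X = Φd X := by
    ext i j <;> simp [Tess.matD, Φd, φd, TessAux.phi, RingHom.mapMatrix_apply,
      Matrix.map_apply] <;> ring
  have matrix_eq : ∀ A B : Matrix (Fin p) (Fin p) (Tess ℝ α β),
      Φs A = Φs B → Φd A = Φd B → A = B := by
    intro A B h1 h2
    apply Matrix.ext
    intro i j
    have e1 : φs (A i j) = φs (B i j) := congrFun (congrFun h1 i) j
    have e2 : φd (A i j) = φd (B i j) := congrFun (congrFun h2 i) j
    exact TessAux.eq_of_phi α β s hs hs0 _ _ e1 e2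
  have key : ∀ Ys Yd : Matrix (Fin p) (Fin p) (Tess ℝ α β),
      Tess.matInCα Ys → Tess.matS X * Ys = 1 → Ys * Tess.matS X = 1 →
      Tess.matInCα Yd → Tess.matD X * Yd = 1 → Yd * Tess.matD X = 1 →
      (X * (Matrix.of fun i j =>
          Tess.ofBase (1 / 2 : ℝ) * (Ys i j + Yd i j)
            + (Tess.ofBase (1 / Real.sqrt β)
                * (Ys i j - Tess.ofBase (1 / 2 : ℝ) * (Ys i j + Yd i j)))
              * Tess.unitJ) = 1 ∧
       (Matrix.of fun i j =>
          Tess.ofBase (1 / 2 : ℝ) * (Ys i j + Yd i j)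
            + (Tess.ofBase (1 / Real.sqrt β)
                * (Ys i j - Tess.ofBase (1 / 2 : ℝ) * (Ys i j + Yd i j)))
              * Tess.unitJ) * X = 1) := by
    intro Ys Yd hYsC hs1 hs2 hYdC hd1 hd2
    set Y : Matrix (Fin p) (Fin p) (Tess ℝ α β) := Matrix.of fun i j =>
        Tess.ofBase (1 / 2 : ℝ) * (Ys i j + Yd i j)
          + (Tess.ofBase (1 / Real.sqrt β)
              * (Ys i j - Tess.ofBase (1 / 2 : ℝ) * (Ys i j + Yd i j)))
            * Tess.unitJ with hY
    have hYs : Φs Y = Ys := by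
      apply Matrix.ext
      intro i j
      obtain ⟨hj, hk⟩ := hYsC i j
      simp only [Φs, φs, RingHom.mapMatrix_apply, Matrix.map_apply, hY, Matrix.of_apply]
      apply Tess.ext <;>
        simp [TessAux.phi, Tess.ofBase, Tess.unitJ, sub_eq_add_neg, hj, hk,
          (hYdC i j).1, (hYdC i j).2, ← hs_def] <;>
        field_simp <;> ring
    have hYd : Φd Y = Yd := by
      apply Matrix.ext
      intro i j
      obtain ⟨hj, hk⟩ := hYdC i j
      simp only [Φd, φd, RingHom.mapMatrix_apply, Matrix.map_apply, hY, Matrix.of_apply]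
      apply Tess.ext <;>
        simp [TessAux.phi, Tess.ofBase, Tess.unitJ, sub_eq_add_neg, hj, hk,
          (hYsC i j).1, (hYsC i j).2, ← hs_def] <;>
        field_simp <;> ring
    constructor
    · refine matrix_eq _ _ ?_ ?_
      · rw [map_mul, hYs, ← hmatS, hs1, map_one]
      · rw [map_mul, hYd, ← hmatD, hd1, map_one]
    · refine matrix_eq _ _ ?_ ?_
      · rw [map_mul, hYs, ← hmatS, hs2, map_one]
      · rw [map_mul, hYd, ← hmatD, hd2, map_one]
  constructor
  · constructor
    · rintro ⟨Y, h1, h2⟩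
      refine ⟨⟨Φs Y, ?_, ?_, ?_⟩, ⟨Φd Y, ?_, ?_, ?_⟩⟩
      · intro i j; exact ⟨rfl, rfl⟩
      · rw [hmatS, ← map_mul, h1, map_one]
      · rw [hmatS, ← map_mul, h2, map_one]
      · intro i j; exact ⟨rfl, rfl⟩
      · rw [hmatD, ← map_mul, h1, map_one]
      · rw [hmatD, ← map_mul, h2, map_one]
    · rintro ⟨⟨Ys, hYsC, hs1, hs2⟩, ⟨Yd, hYdC, hd1, hd2⟩⟩
      obtain ⟨h1, h2⟩ := key Ys Yd hYsC hs1 hs2 hYdC hd1 hd2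
      exact ⟨_, h1, h2⟩
  · exact key
end

section
/- Let X ∈ 𝕋_{αβ}^{p×p} be written X = X_s w₁ + X_d w₂ as in the idempotent decomposition. Then X admits a square root in the generalized (αβ)-tessarine matrices if and only if both X_s and X_d admit square roots over ℂ_α (respectively its complexification), and if M_s² = X_s, M_d² = X_d then M = M_s w₁ + M_d w₂ satisfies M² = X. -/
/-- Embedding of real `(αβ)`-tessarines into the generalized (complexified)
`(αβ)`-tessarines `𝔾_{αβ} = 𝕋_{αβ} ⊗ ℂ`. -/
def Tess.toG {α β : ℝ} (x : Tess ℝ α β) : Tess ℂ (α : ℂ) (β : ℂ) :=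
  ⟨(x.re : ℂ), (x.imI : ℂ), (x.imJ : ℂ), (x.imK : ℂ)⟩

/-- The unit `w₁` in the generalized `(αβ)`-tessarines. -/
noncomputable def Tess.w1G (α β : ℝ) : Tess ℂ (α : ℂ) (β : ℂ) :=
  ⟨(1 / 2 : ℂ), 0, ((1 / (2 * Real.sqrt β) : ℝ) : ℂ), 0⟩

/-- The unit `w₂` in the generalized `(αβ)`-tessarines. -/
noncomputable def Tess.w2G (α β : ℝ) : Tess ℂ (α : ℂ) (β : ℂ) :=
  ⟨(1 / 2 : ℂ), 0, -((1 / (2 * Real.sqrt β) : ℝ) : ℂ), 0⟩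

/-- A matrix over the generalized tessarines has entries in the complexification of
the subalgebra `ℂ_α` (spanned by `1, i`). -/
def Tess.matInCαG {α β : ℝ} {p : ℕ} (Y : Matrix (Fin p) (Fin p) (Tess ℂ (α : ℂ) (β : ℂ))) :
    Prop :=
  ∀ i j, (Y i j).imJ = 0 ∧ (Y i j).imK = 0

namespace TessSqrtAux

variable {α β : ℝ}

/-- The "component" ring homomorphism determined by a square root `c` of `β` in `ℂ`. -/
def phi (α β : ℝ) (c : ℂ) (hc : c * c = (β : ℂ)) :
    Tess ℂ (α : ℂ) (β : ℂ) →+* Tess ℂ (α : ℂ) (β : ℂ) where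
  toFun x := ⟨x.re + c * x.imJ, x.imI + c * x.imK, 0, 0⟩
  map_one' := by ext <;> simp
  map_mul' x y := by
    ext
    · simp only [Tess.mul_re, Tess.mul_imI, Tess.mul_imJ, Tess.mul_imK]
      linear_combination (-(x.imJ * y.imJ) - (α : ℂ) * (x.imK * y.imK)) * hc
    · simp only [Tess.mul_re, Tess.mul_imI, Tess.mul_imJ, Tess.mul_imK]
      linear_combination (-(x.imJ * y.imK) - (x.imK * y.imJ)) * hc
    · simp only [Tess.mul_re, Tess.mul_imI, Tess.mul_imJ, Tess.mul_imK]; ring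
    · simp only [Tess.mul_re, Tess.mul_imI, Tess.mul_imJ, Tess.mul_imK]; ring
  map_zero' := by ext <;> simp
  map_add' x y := by ext <;> simp <;> ring

@[simp] lemma phi_apply (α β : ℝ) (c : ℂ) (hc : c * c = (β : ℂ)) (x : Tess ℂ (α : ℂ) (β : ℂ)) :
    phi α β c hc x = ⟨x.re + c * x.imJ, x.imI + c * x.imK, 0, 0⟩ := rfl

lemma hs (hβ : 0 < β) : ((Real.sqrt β : ℝ) : ℂ) * ((Real.sqrt β : ℝ) : ℂ) = (β : ℂ) := by
  norm_cast
  exact Real.mul_self_sqrt hβ.le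

lemma hd (hβ : 0 < β) :
    (-((Real.sqrt β : ℝ) : ℂ)) * (-((Real.sqrt β : ℝ) : ℂ)) = (β : ℂ) := by
  rw [neg_mul_neg]; exact hs hβ

lemma hr14 (hβ : 0 < β) :
    β * (1 / (2 * Real.sqrt β)) * (1 / (2 * Real.sqrt β)) = 1 / 4 := by
  have h : Real.sqrt β ≠ 0 := by positivity
  field_simp
  nlinarith [Real.sq_sqrt hβ.le]

lemma hrst (hβ : 0 < β) : Real.sqrt β * (1 / (2 * Real.sqrt β)) = 1 / 2 := by
  have h : Real.sqrt β ≠ 0 := by positivity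
  field_simp

lemma h14 (hβ : 0 < β) :
    (β : ℂ) * ((1 / (2 * Real.sqrt β) : ℝ) : ℂ) * ((1 / (2 * Real.sqrt β) : ℝ) : ℂ)
      = 1 / 4 := by
  rw [← Complex.ofReal_mul, ← Complex.ofReal_mul, hr14 hβ]
  norm_num

lemma hst (hβ : 0 < β) :
    ((Real.sqrt β : ℝ) : ℂ) * ((1 / (2 * Real.sqrt β) : ℝ) : ℂ) = 1 / 2 := by
  rw [← Complex.ofReal_mul, hrst hβ]
  norm_num

lemma w1_mul_w1 (hβ : 0 < β) : Tess.w1G α β * Tess.w1G α β = Tess.w1G α β := by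
  have h := h14 (β := β) hβ
  ext
  · simp only [Tess.w1G, Tess.mul_re]; linear_combination h
  · simp only [Tess.w1G, Tess.mul_imI]; ring
  · simp only [Tess.w1G, Tess.mul_imJ]; ring
  · simp only [Tess.w1G, Tess.mul_imK]; ring

lemma w2_mul_w2 (hβ : 0 < β) : Tess.w2G α β * Tess.w2G α β = Tess.w2G α β := by
  have h := h14 (β := β) hβ
  ext
  · simp only [Tess.w2G, Tess.mul_re]; linear_combination h
  · simp only [Tess.w2G, Tess.mul_imI]; ring
  · simp only [Tess.w2G, Tess.mul_imJ]; ring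
  · simp only [Tess.w2G, Tess.mul_imK]; ring

lemma w1_mul_w2 (hβ : 0 < β) : Tess.w1G α β * Tess.w2G α β = 0 := by
  have h := h14 (β := β) hβ
  ext
  · simp only [Tess.w1G, Tess.w2G, Tess.mul_re, Tess.zero_re]; linear_combination -h
  · simp only [Tess.w1G, Tess.w2G, Tess.mul_imI, Tess.zero_imI]; ring
  · simp only [Tess.w1G, Tess.w2G, Tess.mul_imJ, Tess.zero_imJ]; ring
  · simp only [Tess.w1G, Tess.w2G, Tess.mul_imK, Tess.zero_imK]; ring

lemma decomp (hβ : 0 < β) {p : ℕ} (X : Matrix (Fin p) (Fin p) (Tess ℝ α β)) (i j : Fin p) :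
    Tess.toG (Tess.matS X i j) * Tess.w1G α β + Tess.toG (Tess.matD X i j) * Tess.w2G α β
      = Tess.toG (X i j) := by
  have h : ((Real.sqrt β : ℝ) : ℂ) ≠ 0 := by
    simp only [ne_eq, Complex.ofReal_eq_zero]
    positivity
  ext <;>
    simp only [Tess.toG, Tess.matS, Tess.matD, Tess.w1G, Tess.w2G, Tess.mul_re, Tess.mul_imI,
      Tess.mul_imJ, Tess.mul_imK, Tess.add_re, Tess.add_imI, Tess.add_imJ, Tess.add_imK,
      Matrix.of_apply] <;>
    push_cast <;> field_simp <;> ring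

end TessSqrtAux
/-- `X = X_s w₁ + X_d w₂` admits a square root among generalized
`(αβ)`-tessarine matrices iff both `X_s` and `X_d` admit square roots over the
complexification of `ℂ_α`; and if `M_s² = X_s`, `M_d² = X_d`, then
`M = M_s w₁ + M_d w₂` satisfies `M² = X`. -/
theorem tess_matrix_sqrt (α β : ℝ) (hα : α ≠ 0) (hβ : 0 < β) (p : ℕ)
    (X : Matrix (Fin p) (Fin p) (Tess ℝ α β)) :
    ((∃ M : Matrix (Fin p) (Fin p) (Tess ℂ (α : ℂ) (β : ℂ)),
        M * M = X.map Tess.toG) ↔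
      ((∃ Ms : Matrix (Fin p) (Fin p) (Tess ℂ (α : ℂ) (β : ℂ)),
          Tess.matInCαG Ms ∧ Ms * Ms = (Tess.matS X).map Tess.toG) ∧
       (∃ Md : Matrix (Fin p) (Fin p) (Tess ℂ (α : ℂ) (β : ℂ)),
          Tess.matInCαG Md ∧ Md * Md = (Tess.matD X).map Tess.toG))) ∧
    (∀ Ms Md : Matrix (Fin p) (Fin p) (Tess ℂ (α : ℂ) (β : ℂ)),
      Ms * Ms = (Tess.matS X).map Tess.toG →
      Md * Md = (Tess.matD X).map Tess.toG →
      (Matrix.of fun i j => Ms i j * Tess.w1G α β + Md i j * Tess.w2G α β) *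
        (Matrix.of fun i j => Ms i j * Tess.w1G α β + Md i j * Tess.w2G α β)
        = X.map Tess.toG) := by
  classical
  have part2 : ∀ Ms Md : Matrix (Fin p) (Fin p) (Tess ℂ (α : ℂ) (β : ℂ)),
      Ms * Ms = (Tess.matS X).map Tess.toG →
      Md * Md = (Tess.matD X).map Tess.toG →
      (Matrix.of fun i j => Ms i j * Tess.w1G α β + Md i j * Tess.w2G α β) *
        (Matrix.of fun i j => Ms i j * Tess.w1G α β + Md i j * Tess.w2G α β)
        = X.map Tess.toG := by
    intro Ms Md hMs hMd
    have hw1 := TessSqrtAux.w1_mul_w1 (α := α) (β := β) hβ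
    have hw2 := TessSqrtAux.w2_mul_w2 (α := α) (β := β) hβ
    have hw12 := TessSqrtAux.w1_mul_w2 (α := α) (β := β) hβ
    refine Matrix.ext fun i j => ?_
    rw [Matrix.mul_apply]
    simp only [Matrix.of_apply, Matrix.map_apply]
    calc ∑ k, (Ms i k * Tess.w1G α β + Md i k * Tess.w2G α β) *
            (Ms k j * Tess.w1G α β + Md k j * Tess.w2G α β)
        = ∑ k, (Ms i k * Ms k j * Tess.w1G α β + Md i k * Md k j * Tess.w2G α β) := by
          refine Finset.sum_congr rfl fun k _ => ?_
          linear_combination (Ms i k * Ms k j) * hw1 + (Md i k * Md k j) * hw2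
            + (Ms i k * Md k j + Md i k * Ms k j) * hw12
      _ = (Ms * Ms) i j * Tess.w1G α β + (Md * Md) i j * Tess.w2G α β := by
          rw [Finset.sum_add_distrib, ← Finset.sum_mul, ← Finset.sum_mul,
            Matrix.mul_apply, Matrix.mul_apply]
      _ = Tess.toG (X i j) := by
          rw [hMs, hMd]
          simp only [Matrix.map_apply]
          exact TessSqrtAux.decomp hβ X i j
  refine ⟨⟨?_, ?_⟩, part2⟩
  · rintro ⟨M, hM⟩
    constructor
    · refine ⟨M.map (TessSqrtAux.phi α β _ (TessSqrtAux.hs hβ)), fun i j => ⟨rfl, rfl⟩, ?_⟩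
      rw [← Matrix.map_mul, hM, Matrix.map_map]
      refine Matrix.ext fun i j => ?_
      simp only [Matrix.map_apply, Function.comp_apply, TessSqrtAux.phi_apply, Tess.toG,
        Tess.matS, Matrix.of_apply]
      ext <;> push_cast <;> ring
    · refine ⟨M.map (TessSqrtAux.phi α β _ (TessSqrtAux.hd hβ)), fun i j => ⟨rfl, rfl⟩, ?_⟩
      rw [← Matrix.map_mul, hM, Matrix.map_map]
      refine Matrix.ext fun i j => ?_
      simp only [Matrix.map_apply, Function.comp_apply, TessSqrtAux.phi_apply, Tess.toG,
        Tess.matD, Matrix.of_apply]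
      ext <;> push_cast <;> ring
  · rintro ⟨⟨Ms, -, hMs⟩, ⟨Md, -, hMd⟩⟩
    exact ⟨_, part2 Ms Md hMs hMd⟩
end

section
/- Let λ be an eigenvalue of X_s with eigenvector u_s and μ an eigenvalue of X_d with eigenvector u_d, where X = X_s w₁ + X_d w₂ ∈ 𝕋_{αβ}^{p×p} is the idempotent decomposition. Then λ w₁ + μ w₂ is an eigenvalue of X with eigenvector u_s w₁ + u_d w₂, i.e. X(u_s w₁ + u_d w₂) = (λ w₁ + μ w₂)(u_s w₁ + u_d w₂). -/
section Aux

variable {α β : ℝ}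

lemma Tess.w1_mul_w1 (hβ : 0 < β) : Tess.w1 α β * Tess.w1 α β = Tess.w1 α β := by
  have hs : Real.sqrt β ≠ 0 := ne_of_gt (Real.sqrt_pos.mpr hβ)
  have hss : Real.sqrt β * Real.sqrt β = β := Real.mul_self_sqrt hβ.le
  ext <;> simp [Tess.w1] <;> field_simp <;> nlinarith [hss]

lemma Tess.w2_mul_w2 (hβ : 0 < β) : Tess.w2 α β * Tess.w2 α β = Tess.w2 α β := by
  have hs : Real.sqrt β ≠ 0 := ne_of_gt (Real.sqrt_pos.mpr hβ)
  have hss : Real.sqrt β * Real.sqrt β = β := Real.mul_self_sqrt hβ.le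
  ext <;> simp [Tess.w2] <;> field_simp <;> nlinarith [hss]

lemma Tess.w1_mul_w2 (hβ : 0 < β) : Tess.w1 α β * Tess.w2 α β = 0 := by
  have hs : Real.sqrt β ≠ 0 := ne_of_gt (Real.sqrt_pos.mpr hβ)
  have hss : Real.sqrt β * Real.sqrt β = β := Real.mul_self_sqrt hβ.le
  ext <;> simp [Tess.w1, Tess.w2] <;> field_simp <;> nlinarith [hss]

lemma Tess.decomp (hβ : 0 < β) {p q : ℕ} (X : Matrix (Fin p) (Fin q) (Tess ℝ α β))
    (i : Fin p) (j : Fin q) :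
    X i j = Tess.matS X i j * Tess.w1 α β + Tess.matD X i j * Tess.w2 α β := by
  have hs : Real.sqrt β ≠ 0 := ne_of_gt (Real.sqrt_pos.mpr hβ)
  ext <;> simp [Tess.w1, Tess.w2, Tess.matS, Tess.matD] <;> field_simp <;> ring

lemma Tess.combine (hβ : 0 < β) (a b c d : Tess ℝ α β) :
    (a * Tess.w1 α β + b * Tess.w2 α β) * (c * Tess.w1 α β + d * Tess.w2 α β)
      = (a * c) * Tess.w1 α β + (b * d) * Tess.w2 α β := by
  have h1 := Tess.w1_mul_w1 (α := α) hβ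
  have h2 := Tess.w2_mul_w2 (α := α) hβ
  have h12 := Tess.w1_mul_w2 (α := α) hβ
  calc (a * Tess.w1 α β + b * Tess.w2 α β) * (c * Tess.w1 α β + d * Tess.w2 α β)
      = (a * c) * (Tess.w1 α β * Tess.w1 α β) + (b * d) * (Tess.w2 α β * Tess.w2 α β)
        + (a * d + b * c) * (Tess.w1 α β * Tess.w2 α β) := by ring
    _ = (a * c) * Tess.w1 α β + (b * d) * Tess.w2 α β := by
        rw [h1, h2, h12]; ring

end Aux

/-- if `λ` is an eigenvalue of `X_s` with eigenvector `u_s` and `μ` an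
eigenvalue of `X_d` with eigenvector `u_d` (all over the subalgebra `ℂ_α`), then
`λ w₁ + μ w₂` is an eigenvalue of `X` with eigenvector `u_s w₁ + u_d w₂`. -/
theorem tess_eigen_combine (α β : ℝ) (hα : α ≠ 0) (hβ : 0 < β) (p : ℕ)
    (X : Matrix (Fin p) (Fin p) (Tess ℝ α β)) (lam mu : Tess ℝ α β)
    (us ud : Fin p → Tess ℝ α β)
    (hlam : lam.imJ = 0 ∧ lam.imK = 0) (hmu : mu.imJ = 0 ∧ mu.imK = 0)
    (hus : ∀ n, (us n).imJ = 0 ∧ (us n).imK = 0)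
    (hud : ∀ n, (ud n).imJ = 0 ∧ (ud n).imK = 0)
    (hs : (Tess.matS X).mulVec us = fun n => lam * us n)
    (hd : (Tess.matD X).mulVec ud = fun n => mu * ud n) :
    X.mulVec (fun n => us n * Tess.w1 α β + ud n * Tess.w2 α β)
      = fun n => (lam * Tess.w1 α β + mu * Tess.w2 α β)
          * (us n * Tess.w1 α β + ud n * Tess.w2 α β) := by
  funext n
  have hsn := congrFun hs n
  have hdn := congrFun hd n
  simp only [Matrix.mulVec, dotProduct] at hsn hdn ⊢
  calc ∑ j, X n j * (us j * Tess.w1 α β + ud j * Tess.w2 α β)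
      = ∑ j, ((Tess.matS X n j * us j) * Tess.w1 α β
          + (Tess.matD X n j * ud j) * Tess.w2 α β) := by
        refine Finset.sum_congr rfl fun j _ => ?_
        rw [Tess.decomp hβ X n j, Tess.combine hβ]
    _ = (∑ j, Tess.matS X n j * us j) * Tess.w1 α β
        + (∑ j, Tess.matD X n j * ud j) * Tess.w2 α β := by
        rw [Finset.sum_add_distrib, Finset.sum_mul, Finset.sum_mul]
    _ = (lam * us n) * Tess.w1 α β + (mu * ud n) * Tess.w2 α β := by rw [hsn, hdn]
    _ = (lam * Tess.w1 α β + mu * Tess.w2 α β)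
          * (us n * Tess.w1 α β + ud n * Tess.w2 α β) := by rw [Tess.combine hβ]
end
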